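/- arXiv:2208.11200 — 8 statements merged into one kernel-verified Lean document; each statement's English description precedes it below -/
import Mathlib

section
/- Uniqueness of FirmCore: for every integer k ≥ 0 and integer λ with 1 ≤ λ ≤ |L|, if S₁ and S₂ are both maximal (under set inclusion) subsets of V satisfying the (k,λ)-FirmCore property, then S₁ = S₂. (Equivalently: if S₁ and S₂ both satisfy the (k,λ)-FirmCore property, then so does S₁ ∪ S₂; hence the maximal such set is unique.) -/
open Finset

/-- Degree of `v` in the subgraph of layer `ℓ` induced by the vertex set `S`. -/
def degS {V L : Type*} (G : L → SimpleGraph V) [∀ ℓ, DecidableRel (G ℓ).Adj]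
    (S : Finset V) (ℓ : L) (v : V) : ℕ :=
  (S.filter fun u => (G ℓ).Adj v u).card

/-- `S` satisfies the `(k,λ)`-FirmCore property: every vertex of `S` has, in at least
`λ` layers, at least `k` neighbors inside `S`. -/
def FCProp {V L : Type*} [Fintype L] (G : L → SimpleGraph V)
    [∀ ℓ, DecidableRel (G ℓ).Adj] (k lam : ℕ) (S : Finset V) : Prop :=
  ∀ v ∈ S, lam ≤ (univ.filter fun ℓ : L => k ≤ degS G S ℓ v).card

/-- `C` is the `(k,λ)`-FirmCore: it satisfies the FirmCore property and is maximal
(under set inclusion) among such sets. -/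
def IsFirmCore {V L : Type*} [Fintype L] (G : L → SimpleGraph V)
    [∀ ℓ, DecidableRel (G ℓ).Adj] (k lam : ℕ) (C : Finset V) : Prop :=
  FCProp G k lam C ∧ ∀ S : Finset V, FCProp G k lam S → C ⊆ S → S = C


lemma degS_mono {V L : Type*} (G : L → SimpleGraph V) [∀ ℓ, DecidableRel (G ℓ).Adj]
    {S T : Finset V} (h : S ⊆ T) (ℓ : L) (v : V) : degS G S ℓ v ≤ degS G T ℓ v :=
  Finset.card_le_card (Finset.filter_subset_filter _ h)

lemma fcprop_mono {V L : Type*} [Fintype L] (G : L → SimpleGraph V)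
    [∀ ℓ, DecidableRel (G ℓ).Adj] {k lam : ℕ} {S T : Finset V}
    (h : S ⊆ T) (hS : FCProp G k lam S) : ∀ v ∈ S,
    lam ≤ (univ.filter fun ℓ : L => k ≤ degS G T ℓ v).card := by
  intro v hv
  refine le_trans (hS v hv) (Finset.card_le_card ?_)
  intro ℓ hℓ
  simp only [Finset.mem_filter, Finset.mem_univ, true_and] at *
  exact le_trans hℓ (degS_mono G h ℓ v)

/-- Uniqueness of the `(k,λ)`-FirmCore. -/
theorem firmcore_unique {V L : Type*} [Fintype L] (G : L → SimpleGraph V)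
    [∀ ℓ, DecidableRel (G ℓ).Adj]
    (k lam : ℕ) (hlam : 1 ≤ lam) (hlamL : lam ≤ Fintype.card L)
    (S₁ S₂ : Finset V)
    (h₁ : IsFirmCore G k lam S₁) (h₂ : IsFirmCore G k lam S₂) :
    S₁ = S₂ := by
  classical
  have hu : FCProp G k lam (S₁ ∪ S₂) := by
    intro v hv
    rcases Finset.mem_union.mp hv with h | h
    · exact fcprop_mono G Finset.subset_union_left h₁.1 v h
    · exact fcprop_mono G Finset.subset_union_right h₂.1 v h
  have e1 := h₁.2 (S₁ ∪ S₂) hu Finset.subset_union_left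
  have e2 := h₂.2 (S₁ ∪ S₂) hu Finset.subset_union_right
  exact e1.symm.trans e2
end

section
/- Hierarchical structure of FirmCores: for every integer k ≥ 0 and integer λ with 1 ≤ λ ≤ |L|, the (k+1,λ)-FirmCore of G is a subset of the (k,λ)-FirmCore of G, and (when λ+1 ≤ |L|) the (k,λ+1)-FirmCore of G is a subset of the (k,λ)-FirmCore of G. -/
open Finset

lemma FCProp_mono_k {V L : Type*} [Fintype L] (G : L → SimpleGraph V)
    [∀ ℓ, DecidableRel (G ℓ).Adj] {k k' lam : ℕ} (hk : k ≤ k') {S : Finset V}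
    (h : FCProp G k' lam S) : FCProp G k lam S := by
  intro v hv
  refine le_trans (h v hv) (Finset.card_le_card ?_)
  intro ℓ hℓ
  simp only [Finset.mem_filter, Finset.mem_univ, true_and] at *
  omega

lemma FCProp_mono_lam {V L : Type*} [Fintype L] (G : L → SimpleGraph V)
    [∀ ℓ, DecidableRel (G ℓ).Adj] {k lam lam' : ℕ} (hl : lam ≤ lam') {S : Finset V}
    (h : FCProp G k lam' S) : FCProp G k lam S :=
  fun v hv => le_trans hl (h v hv)

lemma FCProp_union {V L : Type*} [Fintype L] [DecidableEq V] (G : L → SimpleGraph V)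
    [∀ ℓ, DecidableRel (G ℓ).Adj] {k lam : ℕ} {S T : Finset V}
    (hS : FCProp G k lam S) (hT : FCProp G k lam T) : FCProp G k lam (S ∪ T) := by
  intro v hv
  have key : ∀ U : Finset V, U ⊆ S ∪ T → v ∈ U → FCProp G k lam U →
      lam ≤ (univ.filter fun ℓ : L => k ≤ degS G (S ∪ T) ℓ v).card := by
    intro U hU hvU hFC
    refine le_trans (hFC v hvU) (Finset.card_le_card ?_)
    intro ℓ hℓ
    simp only [Finset.mem_filter, Finset.mem_univ, true_and] at *
    exact le_trans hℓ (degS_mono G hU ℓ v)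
  rcases Finset.mem_union.1 hv with h | h
  · exact key S Finset.subset_union_left h hS
  · exact key T Finset.subset_union_right h hT

lemma subset_of_maximal {V L : Type*} [Fintype L] [DecidableEq V] (G : L → SimpleGraph V)
    [∀ ℓ, DecidableRel (G ℓ).Adj] {k lam : ℕ} {C S : Finset V}
    (hC : IsFirmCore G k lam C) (hS : FCProp G k lam S) : S ⊆ C := by
  have := hC.2 (C ∪ S) (FCProp_union G hC.1 hS) Finset.subset_union_left
  exact this ▸ Finset.subset_union_right

/-- Hierarchical structure of FirmCores: the `(k+1,λ)`-FirmCore and (when `λ+1 ≤ |L|`)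
the `(k,λ+1)`-FirmCore are contained in the `(k,λ)`-FirmCore. -/
theorem firmcore_hierarchy {V L : Type*} [Fintype L] (G : L → SimpleGraph V)
    [∀ ℓ, DecidableRel (G ℓ).Adj]
    (k lam : ℕ) (hlam : 1 ≤ lam) (hlamL : lam ≤ Fintype.card L)
    (C : Finset V) (hC : IsFirmCore G k lam C) :
    (∀ C₁ : Finset V, IsFirmCore G (k + 1) lam C₁ → C₁ ⊆ C) ∧
    (lam + 1 ≤ Fintype.card L →
      ∀ C₂ : Finset V, IsFirmCore G k (lam + 1) C₂ → C₂ ⊆ C) := by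
  classical
  constructor
  · exact fun C₁ h₁ => subset_of_maximal G hC (FCProp_mono_k G (Nat.le_succ k) h₁.1)
  · exact fun _ C₂ h₂ => subset_of_maximal G hC (FCProp_mono_lam G (Nat.le_succ lam) h₂.1)
end

section
/- Uniqueness of FirmD-Core: for all integers k,r ≥ 0 and integer λ with 1 ≤ λ ≤ |L|, if (S₁,T₁) and (S₂,T₂) are both maximal pairs of subsets of V satisfying the (k,r,λ)-FirmD-Core property, then S₁ = S₂ and T₁ = T₂. (Equivalently: if (S₁,T₁) and (S₂,T₂) both satisfy the (k,r,λ)-FirmD-Core property, then so does (S₁∪S₂, T₁∪T₂); hence the maximal such pair is unique.) -/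
open Finset

/-- Number of out-neighbors of `v` inside `T`, in layer `ℓ`. -/
def dOut {V L : Type*} (D : L → V → V → Prop) [∀ ℓ, DecidableRel (D ℓ)]
    (ℓ : L) (T : Finset V) (v : V) : ℕ :=
  (T.filter fun u => D ℓ v u).card

/-- Number of in-neighbors of `u` inside `S`, in layer `ℓ`. -/
def dIn {V L : Type*} (D : L → V → V → Prop) [∀ ℓ, DecidableRel (D ℓ)]
    (ℓ : L) (S : Finset V) (u : V) : ℕ :=
  (S.filter fun v => D ℓ v u).card

/-- `(S,T)` satisfies the `(k,r,λ)`-FirmD-Core property: every `v ∈ S` has, in at least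
`λ` layers, at least `k` out-neighbors in `T`, and every `u ∈ T` has, in at least `λ`
layers, at least `r` in-neighbors in `S`. -/
def FDCProp {V L : Type*} [Fintype L] (D : L → V → V → Prop)
    [∀ ℓ, DecidableRel (D ℓ)] (k r lam : ℕ) (S T : Finset V) : Prop :=
  (∀ v ∈ S, lam ≤ (univ.filter fun ℓ : L => k ≤ dOut D ℓ T v).card) ∧
  (∀ u ∈ T, lam ≤ (univ.filter fun ℓ : L => r ≤ dIn D ℓ S u).card)

/-- `(S,T)` is the `(k,r,λ)`-FirmD-Core: it satisfies the FirmD-Core property and is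
maximal under componentwise inclusion among such pairs. -/
def IsFDC {V L : Type*} [Fintype L] (D : L → V → V → Prop)
    [∀ ℓ, DecidableRel (D ℓ)] (k r lam : ℕ) (S T : Finset V) : Prop :=
  FDCProp D k r lam S T ∧
    ∀ S' T' : Finset V, FDCProp D k r lam S' T' → S ⊆ S' → T ⊆ T' → S' = S ∧ T' = T

/-- Uniqueness of the `(k,r,λ)`-FirmD-Core. -/
theorem firmdcore_unique {V L : Type*} [Fintype L] (D : L → V → V → Prop)
    [∀ ℓ, DecidableRel (D ℓ)]
    (k r lam : ℕ) (hlam : 1 ≤ lam) (hlamL : lam ≤ Fintype.card L)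
    (S₁ T₁ S₂ T₂ : Finset V)
    (h₁ : IsFDC D k r lam S₁ T₁) (h₂ : IsFDC D k r lam S₂ T₂) :
    S₁ = S₂ ∧ T₁ = T₂ := by
  classical
  have hmono : FDCProp D k r lam (S₁ ∪ S₂) (T₁ ∪ T₂) := by
    constructor
    · intro v hv
      have key : ∀ (T T' : Finset V), (∀ x ∈ S₁ ∪ S₂, v = x → lam ≤ (univ.filter fun ℓ : L => k ≤ dOut D ℓ T v).card) → True := fun _ _ _ => trivial
      rcases Finset.mem_union.mp hv with hv | hv
      · refine le_trans (h₁.1.1 v hv) (Finset.card_le_card ?_)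
        refine Finset.monotone_filter_right _ fun ℓ _ hk => le_trans hk ?_
        exact Finset.card_le_card (Finset.filter_subset_filter _ Finset.subset_union_left)
      · refine le_trans (h₂.1.1 v hv) (Finset.card_le_card ?_)
        refine Finset.monotone_filter_right _ fun ℓ _ hk => le_trans hk ?_
        exact Finset.card_le_card (Finset.filter_subset_filter _ Finset.subset_union_right)
    · intro u hu
      rcases Finset.mem_union.mp hu with hu | hu
      · refine le_trans (h₁.1.2 u hu) (Finset.card_le_card ?_)
        refine Finset.monotone_filter_right _ fun ℓ _ hk => le_trans hk ?_
        exact Finset.card_le_card (Finset.filter_subset_filter _ Finset.subset_union_left)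
      · refine le_trans (h₂.1.2 u hu) (Finset.card_le_card ?_)
        refine Finset.monotone_filter_right _ fun ℓ _ hk => le_trans hk ?_
        exact Finset.card_le_card (Finset.filter_subset_filter _ Finset.subset_union_right)
  obtain ⟨hS1, hT1⟩ := h₁.2 _ _ hmono Finset.subset_union_left Finset.subset_union_left
  obtain ⟨hS2, hT2⟩ := h₂.2 _ _ hmono Finset.subset_union_right Finset.subset_union_right
  exact ⟨hS1 ▸ hS2.symm ▸ rfl, hT1 ▸ hT2.symm ▸ rfl⟩
end

section
/- Iterated pigeonhole step in the FirmCore density bound: let C be a nonempty subset of V satisfying the (k,λ)-FirmCore property for integers k ≥ 0 and 1 ≤ λ ≤ |L|. Then for every integer j with 1 ≤ j ≤ λ there exists a set of layers L̃ ⊆ L with |L̃| = j such that for every ℓ ∈ L̃, |E_ℓ[C]| / |C| ≥ (λ − j + 1)·k / (2|L|). -/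
open Finset

/-- Number of edges of the subgraph of layer `ℓ` induced by `S` (ordered pairs halved). -/
def edgeCount {V L : Type*} (G : L → SimpleGraph V) [∀ ℓ, DecidableRel (G ℓ).Adj]
    (ℓ : L) (S : Finset V) : ℕ :=
  ((S ×ˢ S).filter fun p : V × V => (G ℓ).Adj p.1 p.2).card / 2

/-- The multilayer density `ρ(S) = max_{∅ ≠ L̂ ⊆ L} (min_{ℓ ∈ L̂} |E_ℓ[S]|/|S|) · |L̂|^β`. -/
noncomputable def mlDensity {V L : Type*} (G : L → SimpleGraph V)
    [∀ ℓ, DecidableRel (G ℓ).Adj] (β : ℝ) (S : Finset V) : ℝ :=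
  sSup { x : ℝ | ∃ Lh : Finset L, Lh.Nonempty ∧
    x = sInf { y : ℝ | ∃ ℓ ∈ Lh, y = (edgeCount G ℓ S : ℝ) / (S.card : ℝ) } *
      (Lh.card : ℝ) ^ β }


lemma even_card_of_invol {α : Type*} [DecidableEq α] (s : Finset α) (f : α → α)
    (h1 : ∀ a ∈ s, f a ∈ s) (h2 : ∀ a ∈ s, f (f a) = a) (h3 : ∀ a ∈ s, f a ≠ a) :
    Even s.card := by
  induction s using Finset.strongInduction with
  | _ s ih =>
    rcases s.eq_empty_or_nonempty with rfl | ⟨a, ha⟩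
    · simp
    · have hfa : f a ∈ s := h1 a ha
      have hne : f a ≠ a := h3 a ha
      set t := (s.erase a).erase (f a) with ht
      have hts : t ⊂ s := by
        refine (Finset.ssubset_iff_of_subset
          ((Finset.erase_subset _ _).trans (Finset.erase_subset _ _))).mpr ⟨a, ha, ?_⟩
        simp [ht]
      have hmem : ∀ b, b ∈ t ↔ b ∈ s ∧ b ≠ a ∧ b ≠ f a := by
        intro b; simp [ht, Finset.mem_erase]; tauto
      have ht1 : ∀ b ∈ t, f b ∈ t := by
        intro b hb
        rw [hmem] at hb ⊢
        obtain ⟨hbs, hba, hbfa⟩ := hb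
        refine ⟨h1 b hbs, ?_, ?_⟩
        · intro h; apply hbfa; rw [← h2 b hbs, h]
        · intro h
          have : f (f b) = f (f a) := by rw [h]
          rw [h2 b hbs, h2 a ha] at this; exact hba this
      have hcard : s.card = t.card + 2 := by
        have h1' : (s.erase a).card = s.card - 1 := Finset.card_erase_of_mem ha
        have h2' : t.card = (s.erase a).card - 1 :=
          Finset.card_erase_of_mem (Finset.mem_erase.mpr ⟨hne, hfa⟩)
        have hc1 : 1 ≤ s.card := Finset.card_pos.mpr ⟨a, ha⟩
        have hc2 : 2 ≤ s.card := by
          have : ({a, f a} : Finset α) ⊆ s := by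
            intro x hx; simp at hx; rcases hx with rfl | rfl <;> assumption
          calc 2 = ({a, f a} : Finset α).card := by rw [Finset.card_insert_of_notMem (by simp [Ne.symm hne]), Finset.card_singleton]
          _ ≤ s.card := Finset.card_le_card this
        omega
      have := ih t hts ht1 (fun b hb => h2 b ((hmem b).mp hb).1)
        (fun b hb => h3 b ((hmem b).mp hb).1)
      rw [hcard]
      exact this.add (by decide)

lemma pairsum {V L : Type*} (G : L → SimpleGraph V) [∀ ℓ, DecidableRel (G ℓ).Adj]
    (ℓ : L) (C : Finset V) [DecidableEq V] :
    ((C ×ˢ C).filter fun p : V × V => (G ℓ).Adj p.1 p.2).card = ∑ v ∈ C, degS G C ℓ v := by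
  rw [Finset.card_eq_sum_card_fiberwise (f := Prod.fst) (t := C)
    (fun p hp => (Finset.mem_product.mp (Finset.mem_filter.mp hp).1).1)]
  refine Finset.sum_congr rfl fun v hv => ?_
  have : (((C ×ˢ C).filter fun p : V × V => (G ℓ).Adj p.1 p.2).filter fun p => p.1 = v)
      = (C.filter fun u => (G ℓ).Adj v u).image (fun u => (v, u)) := by
    ext ⟨a, b⟩
    simp only [Finset.mem_filter, Finset.mem_product, Finset.mem_image, Prod.mk.injEq]
    constructor
    · rintro ⟨⟨⟨ha, hb⟩, hadj⟩, rfl⟩; exact ⟨b, ⟨hb, hadj⟩, rfl, rfl⟩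
    · rintro ⟨u, ⟨hu, hadj⟩, rfl, rfl⟩; exact ⟨⟨⟨hv, hu⟩, hadj⟩, rfl⟩
  rw [this, Finset.card_image_of_injective _ (fun a b h => (Prod.mk.injEq _ _ _ _).mp h |>.2)]
  rfl

/-- Iterated pigeonhole step: if `C` satisfies the `(k,λ)`-FirmCore property, then for
every `1 ≤ j ≤ λ` there are `j` layers in each of which the induced edge density of `C`
is at least `(λ - j + 1)·k / (2|L|)`. -/
theorem firmcore_pigeonhole_step {V L : Type*} [Fintype L] (G : L → SimpleGraph V)
    [∀ ℓ, DecidableRel (G ℓ).Adj]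
    (k lam : ℕ) (hlam : 1 ≤ lam) (hlamL : lam ≤ Fintype.card L)
    (C : Finset V) (hC : C.Nonempty) (h : FCProp G k lam C) :
    ∀ j : ℕ, 1 ≤ j → j ≤ lam → ∃ Lt : Finset L, Lt.card = j ∧
      ∀ ℓ ∈ Lt,
        ((lam : ℝ) - (j : ℝ) + 1) * (k : ℝ) / (2 * (Fintype.card L : ℝ)) ≤
          (edgeCount G ℓ C : ℝ) / (C.card : ℝ) := by
  classical
  intro j hj1 hjlam
  set a := Fintype.card L with ha
  set c := C.card with hc
  have hLpos : 1 ≤ a := le_trans hlam hlamL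
  have hCpos : 1 ≤ c := Finset.card_pos.mpr hC
  set f : L → ℕ := fun ℓ => (C.filter fun v => k ≤ degS G C ℓ v).card with hf
  -- double counting
  have hdc : lam * c ≤ ∑ ℓ : L, f ℓ := by
    have hcomm : ∑ ℓ : L, f ℓ
        = ∑ v ∈ C, (univ.filter fun ℓ : L => k ≤ degS G C ℓ v).card := by
      simp only [hf, Finset.card_filter]
      exact Finset.sum_comm
    rw [hcomm]
    calc lam * c = ∑ _v ∈ C, lam := by rw [Finset.sum_const, smul_eq_mul, mul_comm]
    _ ≤ _ := Finset.sum_le_sum fun v hv => h v hv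
  -- the good layers
  set T : Finset L := univ.filter fun ℓ : L => (lam + 1 - j) * c ≤ a * f ℓ with hT
  have hTcard : j ≤ T.card := by
    by_contra hcon
    push_neg at hcon
    have hS1 : lam * (a * c) ≤ ∑ ℓ : L, a * f ℓ := by
      rw [← Finset.mul_sum, mul_left_comm]
      exact Nat.mul_le_mul_left a hdc
    have hsplit : ∑ ℓ : L, a * f ℓ
        = ∑ ℓ ∈ T, a * f ℓ
          + ∑ ℓ ∈ univ.filter (fun ℓ : L => ¬ ((lam + 1 - j) * c ≤ a * f ℓ)), a * f ℓ :=
      (Finset.sum_filter_add_sum_filter_not univ _ _).symm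
    have hb1 : ∑ ℓ ∈ T, a * f ℓ ≤ T.card * (a * c) := by
      refine Finset.sum_le_card_nsmul _ _ _ fun ℓ _ => ?_
      exact Nat.mul_le_mul_left a (Finset.card_filter_le _ _)
    set Tc := univ.filter (fun ℓ : L => ¬ ((lam + 1 - j) * c ≤ a * f ℓ)) with hTc
    have hTcc : Tc.card = a - T.card := by
      rw [hTc, hT, Finset.filter_not, Finset.card_sdiff_of_subset (Finset.filter_subset _ _)]
      simp [ha]
    have hTc1 : 1 ≤ Tc.card := by omega
    have hb2 : ∑ ℓ ∈ Tc, a * f ℓ + Tc.card ≤ Tc.card * ((lam + 1 - j) * c) := by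
      have : ∑ ℓ ∈ Tc, (a * f ℓ + 1) ≤ Tc.card * ((lam + 1 - j) * c) := by
        refine Finset.sum_le_card_nsmul _ _ _ fun ℓ hℓ => ?_
        have := (Finset.mem_filter.mp hℓ).2
        omega
      simpa [Finset.sum_add_distrib] using this
    have hb2' : Tc.card * ((lam + 1 - j) * c) ≤ a * ((lam + 1 - j) * c) := by
      refine Nat.mul_le_mul_right _ ?_
      omega
    have hkey : lam * (a * c) + 1 ≤ (j - 1) * (a * c) + (lam + 1 - j) * (a * c) := by
      have e1 : ∑ ℓ ∈ T, a * f ℓ ≤ (j - 1) * (a * c) :=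
        hb1.trans (Nat.mul_le_mul_right _ (by omega))
      have e2 : ∑ ℓ ∈ Tc, a * f ℓ + 1 ≤ (lam + 1 - j) * (a * c) := by
        have : a * ((lam + 1 - j) * c) = (lam + 1 - j) * (a * c) := by ring
        omega
      omega
    have hfin : (j - 1) * (a * c) + (lam + 1 - j) * (a * c) = lam * (a * c) := by
      rw [← Nat.add_mul]
      congr 1
      omega
    omega
  obtain ⟨Lt, hLtT, hLtcard⟩ := Finset.exists_subset_card_eq hTcard
  refine ⟨Lt, hLtcard, fun ℓ hℓ => ?_⟩
  have hkey : (lam + 1 - j) * c ≤ a * f ℓ := (Finset.mem_filter.mp (hLtT hℓ)).2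
  set N := ((C ×ˢ C).filter fun p : V × V => (G ℓ).Adj p.1 p.2).card with hNdef
  have hN : N = ∑ v ∈ C, degS G C ℓ v := pairsum G ℓ C
  have hEven : Even N := by
    refine even_card_of_invol _ Prod.swap ?_ ?_ ?_
    · intro p hp
      obtain ⟨hp1, hp2⟩ := Finset.mem_filter.mp hp
      obtain ⟨hp11, hp12⟩ := Finset.mem_product.mp hp1
      exact Finset.mem_filter.mpr ⟨Finset.mem_product.mpr ⟨hp12, hp11⟩, hp2.symm⟩
    · intro p _; exact Prod.swap_swap p
    · intro p hp hcontra
      obtain ⟨_, hp2⟩ := Finset.mem_filter.mp hp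
      have h1 : p.1 ≠ p.2 := (G ℓ).ne_of_adj hp2
      exact h1 (congrArg Prod.fst hcontra).symm
  have h2E : 2 * edgeCount G ℓ C = N := by
    rw [edgeCount, mul_comm]
    exact Nat.div_two_mul_two_of_even hEven
  have hkf : k * f ℓ ≤ N := by
    calc k * f ℓ = ∑ _v ∈ C.filter fun v => k ≤ degS G C ℓ v, k := by
          rw [Finset.sum_const, smul_eq_mul, mul_comm]
    _ ≤ ∑ v ∈ C.filter fun v => k ≤ degS G C ℓ v, degS G C ℓ v :=
          Finset.sum_le_sum fun v hv => (Finset.mem_filter.mp hv).2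
    _ ≤ ∑ v ∈ C, degS G C ℓ v :=
          Finset.sum_le_sum_of_subset (Finset.filter_subset _ _)
    _ = N := hN.symm
  have hnat : (lam + 1 - j) * c * k ≤ a * (2 * edgeCount G ℓ C) := by
    calc (lam + 1 - j) * c * k ≤ a * f ℓ * k := Nat.mul_le_mul_right k hkey
    _ = a * (k * f ℓ) := by ring
    _ ≤ a * N := Nat.mul_le_mul_left a hkf
    _ = a * (2 * edgeCount G ℓ C) := by rw [h2E]
  have haR : (0:ℝ) < (a:ℝ) := by exact_mod_cast hLpos
  have hcR : (0:ℝ) < (c:ℝ) := by exact_mod_cast hCpos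
  rw [div_le_div_iff₀ (by positivity) hcR]
  have hcast : ((lam : ℝ) - (j : ℝ) + 1) = ((lam + 1 - j : ℕ) : ℝ) := by
    rw [Nat.cast_sub (by omega)]
    push_cast
    ring
  rw [hcast]
  have hR := (Nat.cast_le (α := ℝ)).mpr hnat
  push_cast at hR ⊢
  linarith [hR]
end

section
/- Upper bound on the optimal multilayer density: let β > 0 be real and suppose G has at least one edge in some layer. Let (S*_SL, ℓ*) maximize |E_ℓ[S]|/|S| over all nonempty S ⊆ V and ℓ ∈ L, and let μ* = min_{v∈S*_SL} deg^{S*_SL}_{ℓ*}(v). Then for every nonempty S ⊆ V, ρ(S) ≤ μ* · |L|^β. -/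
open Finset

lemma degS_sum {V L : Type*} (G : L → SimpleGraph V) [∀ ℓ, DecidableRel (G ℓ).Adj]
    (S : Finset V) (ℓ : L) (v : V) :
    degS G S ℓ v = ∑ u ∈ S, if (G ℓ).Adj v u then 1 else 0 := by
  rw [degS, Finset.card_filter]

lemma c_sum {V L : Type*} (G : L → SimpleGraph V) [∀ ℓ, DecidableRel (G ℓ).Adj]
    (S : Finset V) (ℓ : L) :
    ((S ×ˢ S).filter fun p : V × V => (G ℓ).Adj p.1 p.2).card
      = ∑ a ∈ S, ∑ u ∈ S, if (G ℓ).Adj a u then 1 else 0 := by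
  rw [Finset.card_filter, Finset.sum_product]

lemma c_erase {V L : Type*} [DecidableEq V] (G : L → SimpleGraph V)
    [∀ ℓ, DecidableRel (G ℓ).Adj] (S : Finset V) (ℓ : L) (v : V) (hv : v ∈ S) :
    ((S ×ˢ S).filter fun p : V × V => (G ℓ).Adj p.1 p.2).card
      = (((S.erase v) ×ˢ (S.erase v)).filter fun p : V × V => (G ℓ).Adj p.1 p.2).card
        + 2 * degS G S ℓ v := by
  rw [c_sum, c_sum]
  have h1 : ∑ a ∈ S, ∑ u ∈ S, (if (G ℓ).Adj a u then 1 else 0)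
      = (∑ a ∈ S.erase v, ∑ u ∈ S, if (G ℓ).Adj a u then 1 else 0) + degS G S ℓ v := by
    rw [degS_sum, ← Finset.sum_erase_add S _ hv]
  have h2 : ∀ a, ∑ u ∈ S, (if (G ℓ).Adj a u then 1 else 0)
      = (∑ u ∈ S.erase v, if (G ℓ).Adj a u then 1 else 0) + (if (G ℓ).Adj a v then 1 else 0) := by
    intro a; rw [← Finset.sum_erase_add S _ hv]
  have h3 : ∑ a ∈ S.erase v, (if (G ℓ).Adj a v then (1:ℕ) else 0)
      = ∑ a ∈ S, if (G ℓ).Adj a v then 1 else 0 := by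
    apply Finset.sum_erase
    simp
  have h4 : ∑ a ∈ S, (if (G ℓ).Adj a v then (1:ℕ) else 0) = degS G S ℓ v := by
    rw [degS_sum]
    exact Finset.sum_congr rfl fun a _ => by simp [SimpleGraph.adj_comm]
  calc ∑ a ∈ S, ∑ u ∈ S, (if (G ℓ).Adj a u then (1:ℕ) else 0)
      = (∑ a ∈ S.erase v, ∑ u ∈ S, if (G ℓ).Adj a u then 1 else 0) + degS G S ℓ v := h1
    _ = ((∑ a ∈ S.erase v, ∑ u ∈ S.erase v, if (G ℓ).Adj a u then 1 else 0)
          + ∑ a ∈ S.erase v, if (G ℓ).Adj a v then 1 else 0) + degS G S ℓ v := by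
        rw [← Finset.sum_add_distrib]; exact congrArg (· + _) (Finset.sum_congr rfl fun a _ => h2 a)
    _ = _ := by rw [h3, h4]; ring

/-- Lemma 3: upper bound on the optimal multilayer density,
`ρ(S) ≤ μ(S*_SL, ℓ*) · |L|^β` for every nonempty `S`. -/
theorem ml_density_ub {V L : Type*} [Fintype L] (G : L → SimpleGraph V)
    [∀ ℓ, DecidableRel (G ℓ).Adj] (β : ℝ) (hβ : 0 < β)
    (hedge : ∃ (ℓ : L) (v u : V), (G ℓ).Adj v u)
    (Ssl : Finset V) (hSsl : Ssl.Nonempty) (ℓstar : L)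
    (hmax : ∀ S : Finset V, S.Nonempty → ∀ ℓ : L,
      (edgeCount G ℓ S : ℝ) / (S.card : ℝ) ≤
        (edgeCount G ℓstar Ssl : ℝ) / (Ssl.card : ℝ))
    (μ : ℕ) (hμ : μ = Ssl.inf' hSsl fun v => degS G Ssl ℓstar v) :
    ∀ S : Finset V, S.Nonempty →
      mlDensity G β S ≤ (μ : ℝ) * (Fintype.card L : ℝ) ^ β := by
  classical
  -- key: the optimal density is at most μ
  have key : (edgeCount G ℓstar Ssl : ℝ) / (Ssl.card : ℝ) ≤ (μ : ℝ) := by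
    obtain ⟨v, hv, hveq⟩ := Finset.exists_mem_eq_inf' hSsl (degS G Ssl ℓstar)
    have hμv : μ = degS G Ssl ℓstar v := by rw [hμ, hveq]
    rcases Nat.lt_or_ge Ssl.card 2 with h1 | h2
    · -- |Ssl| = 1 : no edges
      have hcard1 : Ssl.card = 1 := by
        have := Finset.card_pos.mpr hSsl; omega
      obtain ⟨w, hw⟩ := Finset.card_eq_one.mp hcard1
      have : edgeCount G ℓstar Ssl = 0 := by
        subst hw
        simp only [edgeCount, Finset.singleton_product_singleton, Finset.filter_singleton]
        simp
      rw [this]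
      simp
    · set S' := Ssl.erase v with hS'
      have hcard' : S'.card = Ssl.card - 1 := Finset.card_erase_of_mem hv
      have hS'ne : S'.Nonempty := by
        rw [← Finset.card_pos]; omega
      have hc := c_erase G Ssl ℓstar v hv
      rw [← hS'] at hc
      have hEC : edgeCount G ℓstar Ssl = edgeCount G ℓstar S' + μ := by
        rw [edgeCount, edgeCount, hc, hμv]; omega
      have hm := hmax S' hS'ne ℓstar
      have hn : (0:ℝ) < (Ssl.card : ℝ) := by positivity
      have hn' : (0:ℝ) < (S'.card : ℝ) := by
        exact_mod_cast Finset.card_pos.mpr hS'ne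
      have hcast : (S'.card : ℝ) = (Ssl.card : ℝ) - 1 := by
        rw [hcard']; push_cast [Nat.cast_sub (by omega : 1 ≤ Ssl.card)]; ring
      rw [div_le_div_iff₀ hn' hn] at hm
      rw [div_le_iff₀ hn]
      have hECr : (edgeCount G ℓstar Ssl : ℝ) = (edgeCount G ℓstar S' : ℝ) + μ := by
        exact_mod_cast hEC
      rw [hECr] at hm ⊢
      rw [hcast] at hm
      nlinarith [hm]
  intro S hS
  have hbound : ∀ ℓ : L, (edgeCount G ℓ S : ℝ) / (S.card : ℝ) ≤ (μ : ℝ) :=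
    fun ℓ => le_trans (hmax S hS ℓ) key
  apply Real.sSup_le
  · rintro x ⟨Lh, hLh, rfl⟩
    obtain ⟨ℓ₀, hℓ₀⟩ := hLh
    set T := { y : ℝ | ∃ ℓ ∈ Lh, y = (edgeCount G ℓ S : ℝ) / (S.card : ℝ) }
    have hTne : T.Nonempty := ⟨_, ℓ₀, hℓ₀, rfl⟩
    have hTbdd : BddBelow T := by
      refine ⟨0, ?_⟩
      rintro y ⟨ℓ, _, rfl⟩
      positivity
    have hInf_nonneg : 0 ≤ sInf T := by
      apply le_csInf hTne
      rintro y ⟨ℓ, _, rfl⟩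
      positivity
    have hInf_le : sInf T ≤ (μ : ℝ) :=
      csInf_le_of_le hTbdd ⟨ℓ₀, hℓ₀, rfl⟩ (hbound ℓ₀)
    have hrpow : (Lh.card : ℝ) ^ β ≤ (Fintype.card L : ℝ) ^ β := by
      apply Real.rpow_le_rpow (by positivity) _ hβ.le
      exact_mod_cast Finset.card_le_univ Lh
    exact mul_le_mul hInf_le hrpow (Real.rpow_nonneg (by positivity) β) (by positivity)
  · positivity
end

section
/- Density lower bound for FirmD-Cores: let β > 0 be real, and let (S,T) with S and T nonempty satisfy the (k,r,λ)-FirmD-Core property for integers k,r ≥ 0 and 1 ≤ λ ≤ |L|. With a = |S|/|T|, we have ρ(S,T) ≥ max over integers ξ with 0 ≤ ξ < λ of ((λ − ξ)(ξ + 1)^β / |L|) · max{ k·√a , r/√a }. -/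
open Finset

/-- Number of edges of layer `ℓ` going from `S` to `T`. -/
def dEdge {V L : Type*} (D : L → V → V → Prop) [∀ ℓ, DecidableRel (D ℓ)]
    (ℓ : L) (S T : Finset V) : ℕ :=
  ((S ×ˢ T).filter fun p : V × V => D ℓ p.1 p.2).card

/-- The directed multilayer density
`ρ(S,T) = max_{∅ ≠ L̂ ⊆ L} (min_{ℓ ∈ L̂} |E_ℓ(S,T)|/√(|S||T|)) · |L̂|^β`. -/
noncomputable def dDensity {V L : Type*} (D : L → V → V → Prop)
    [∀ ℓ, DecidableRel (D ℓ)] (β : ℝ) (S T : Finset V) : ℝ :=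
  sSup { x : ℝ | ∃ Lh : Finset L, Lh.Nonempty ∧
    x = sInf { y : ℝ | ∃ ℓ ∈ Lh,
        y = (dEdge D ℓ S T : ℝ) / Real.sqrt ((S.card : ℝ) * (T.card : ℝ)) } *
      (Lh.card : ℝ) ^ β }

/- ----------------- auxiliary lemmas ----------------- -/

lemma aux_count {L : Type*} [Fintype L] (f : L → ℕ) (n lam ξ : ℕ)
    (hξ : ξ < lam) (hL : lam ≤ Fintype.card L)
    (hf : ∀ ℓ, f ℓ ≤ n) (hsum : lam * n ≤ ∑ ℓ, f ℓ) :
    ξ + 1 ≤ (univ.filter fun ℓ : L => (lam - ξ) * n ≤ f ℓ * Fintype.card L).card := by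
  set cL := Fintype.card L with hcL
  by_contra hcon
  push_neg at hcon
  set A := univ.filter fun ℓ : L => (lam - ξ) * n ≤ f ℓ * cL with hA
  have hAc : A.card ≤ ξ := by omega
  rcases Nat.eq_zero_or_pos ((lam - ξ) * n) with hm | hm
  · have : A = univ := by
      apply Finset.eq_univ_of_forall
      intro ℓ; simp [hA, hm]
    rw [this, Finset.card_univ] at hAc
    omega
  · have hn : 1 ≤ n := by
      rcases Nat.eq_zero_or_pos n with h0 | h0
      · simp [h0] at hm
      · exact h0
    have hcL1 : 1 ≤ cL := le_trans (by omega : 1 ≤ lam) hL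
    have hsplit : ∑ ℓ, f ℓ * cL =
        (∑ ℓ ∈ A, f ℓ * cL) + ∑ ℓ ∈ univ.filter fun ℓ : L => ¬ ((lam - ξ) * n ≤ f ℓ * cL), f ℓ * cL := by
      rw [hA]
      exact (Finset.sum_filter_add_sum_filter_not univ _ _).symm
    have h1 : ∑ ℓ ∈ A, f ℓ * cL ≤ A.card * (n * cL) :=
      Finset.sum_le_card_nsmul A _ (n * cL) (fun ℓ _ => by
        have := hf ℓ; nlinarith)
    have h2 : ∑ ℓ ∈ univ.filter (fun ℓ : L => ¬ ((lam - ξ) * n ≤ f ℓ * cL)), f ℓ * cL ≤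
        cL * ((lam - ξ) * n - 1) := by
      calc _ ≤ (univ.filter (fun ℓ : L => ¬ ((lam - ξ) * n ≤ f ℓ * cL))).card * ((lam - ξ) * n - 1) :=
            Finset.sum_le_card_nsmul _ _ _ (fun ℓ hℓ => by
              simp only [Finset.mem_filter] at hℓ; omega)
        _ ≤ cL * ((lam - ξ) * n - 1) := by
            apply Nat.mul_le_mul_right
            simpa [hcL] using Finset.card_filter_le univ _
    have hbig : lam * n * cL ≤ ∑ ℓ, f ℓ * cL := by
      rw [← Finset.sum_mul]
      exact Nat.mul_le_mul_right _ hsum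
    have hξn : A.card * (n * cL) ≤ ξ * (n * cL) := Nat.mul_le_mul_right _ hAc
    have key : lam * n * cL ≤ ξ * (n * cL) + cL * ((lam - ξ) * n - 1) := by omega
    obtain ⟨m', hm'⟩ : ∃ m', (lam - ξ) * n = m' + 1 :=
      ⟨_, (Nat.succ_pred_eq_of_pos hm).symm⟩
    have h3 : ξ * n + (m' + 1) = lam * n := by
      rw [← hm', ← Nat.add_mul, Nat.add_sub_cancel' (le_of_lt hξ)]
    have h4 : ξ * n * cL + m' * cL + cL = lam * n * cL := by rw [← h3]; ring
    rw [hm', Nat.add_sub_cancel] at key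
    nlinarith [key, h4, hcL1]

lemma dEdge_out {V L : Type*} (D : L → V → V → Prop) [∀ ℓ, DecidableRel (D ℓ)]
    (ℓ : L) (S T : Finset V) :
    dEdge D ℓ S T = ∑ v ∈ S, dOut D ℓ T v := by
  simp only [dEdge, dOut, Finset.card_filter, Finset.sum_product]

lemma dEdge_in {V L : Type*} (D : L → V → V → Prop) [∀ ℓ, DecidableRel (D ℓ)]
    (ℓ : L) (S T : Finset V) :
    dEdge D ℓ S T = ∑ u ∈ T, dIn D ℓ S u := by
  simp only [dEdge, dIn, Finset.card_filter, Finset.sum_product]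
  exact Finset.sum_comm

lemma dEdge_le {V L : Type*} (D : L → V → V → Prop) [∀ ℓ, DecidableRel (D ℓ)]
    (ℓ : L) (S T : Finset V) : dEdge D ℓ S T ≤ S.card * T.card := by
  calc dEdge D ℓ S T ≤ (S ×ˢ T).card := Finset.card_filter_le _ _
    _ = S.card * T.card := Finset.card_product S T

lemma sqrt_ratio₁ (s t a : ℝ) (hs : 0 < s) (ht : 0 < t) (ha : a = s / t) :
    Real.sqrt a = s / Real.sqrt (s * t) := by
  have hst : Real.sqrt (s * t) = Real.sqrt s * Real.sqrt t := Real.sqrt_mul hs.le t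
  have hss : Real.sqrt s * Real.sqrt s = s := Real.mul_self_sqrt hs.le
  have h1 : 0 < Real.sqrt s := Real.sqrt_pos.mpr hs
  have h2 : 0 < Real.sqrt t := Real.sqrt_pos.mpr ht
  rw [ha, Real.sqrt_div hs.le, hst]
  field_simp
  nlinarith

lemma sqrt_ratio₂ (s t a : ℝ) (hs : 0 < s) (ht : 0 < t) (ha : a = s / t) :
    1 / Real.sqrt a = t / Real.sqrt (s * t) := by
  have hst : Real.sqrt (s * t) = Real.sqrt s * Real.sqrt t := Real.sqrt_mul hs.le t
  have htt : Real.sqrt t * Real.sqrt t = t := Real.mul_self_sqrt ht.le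
  have h1 : 0 < Real.sqrt s := Real.sqrt_pos.mpr hs
  have h2 : 0 < Real.sqrt t := Real.sqrt_pos.mpr ht
  rw [ha, Real.sqrt_div hs.le, hst]
  field_simp
  nlinarith

/-- If on some nonempty `Lh` every layer has normalized edge count at least `c ≥ 0`,
then `c * |Lh|^β ≤ ρ(S,T)`. -/
lemma le_dDensity {V L : Type*} [Fintype L] (D : L → V → V → Prop)
    [∀ ℓ, DecidableRel (D ℓ)] (β : ℝ) (hβ : 0 < β) (S T : Finset V)
    (Lh : Finset L) (hLh : Lh.Nonempty) (c : ℝ) (hc0 : 0 ≤ c)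
    (hc : ∀ ℓ ∈ Lh, c ≤ (dEdge D ℓ S T : ℝ) / Real.sqrt ((S.card : ℝ) * (T.card : ℝ))) :
    c * (Lh.card : ℝ) ^ β ≤ dDensity D β S T := by
  set Q := Real.sqrt ((S.card : ℝ) * (T.card : ℝ)) with hQ
  have hQ0 : 0 ≤ Q := Real.sqrt_nonneg _
  set M : ℝ := ((S.card : ℝ) * (T.card : ℝ)) / Q with hM
  have hM0 : 0 ≤ M := div_nonneg (by positivity) hQ0
  -- the set defining the density
  set X := { x : ℝ | ∃ Lh : Finset L, Lh.Nonempty ∧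
    x = sInf { y : ℝ | ∃ ℓ ∈ Lh, y = (dEdge D ℓ S T : ℝ) / Q } * (Lh.card : ℝ) ^ β } with hX
  have hXbdd : BddAbove X := by
    refine ⟨M * (Fintype.card L : ℝ) ^ β, ?_⟩
    rintro x ⟨Lh', hne', rfl⟩
    obtain ⟨ℓ₀, hℓ₀⟩ := hne'
    have hmem : (dEdge D ℓ₀ S T : ℝ) / Q ∈
        { y : ℝ | ∃ ℓ ∈ Lh', y = (dEdge D ℓ S T : ℝ) / Q } := ⟨ℓ₀, hℓ₀, rfl⟩
    have hlb : ∀ y ∈ { y : ℝ | ∃ ℓ ∈ Lh', y = (dEdge D ℓ S T : ℝ) / Q }, (0:ℝ) ≤ y := by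
      rintro y ⟨ℓ, hℓ, rfl⟩
      exact div_nonneg (Nat.cast_nonneg _) hQ0
    have hInf0 : 0 ≤ sInf { y : ℝ | ∃ ℓ ∈ Lh', y = (dEdge D ℓ S T : ℝ) / Q } :=
      Real.sInf_nonneg hlb
    have hInfM : sInf { y : ℝ | ∃ ℓ ∈ Lh', y = (dEdge D ℓ S T : ℝ) / Q } ≤ M := by
      refine le_trans (csInf_le ⟨0, hlb⟩ hmem) ?_
      rw [hM]
      exact div_le_div_of_nonneg_right (by exact_mod_cast dEdge_le D ℓ₀ S T) hQ0
    have hcard : ((Lh'.card : ℝ)) ^ β ≤ ((Fintype.card L : ℝ)) ^ β := by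
      apply Real.rpow_le_rpow (Nat.cast_nonneg _) _ hβ.le
      exact_mod_cast Finset.card_le_univ _
    exact mul_le_mul hInfM hcard (Real.rpow_nonneg (Nat.cast_nonneg _) _) hM0
  have hmemX : sInf { y : ℝ | ∃ ℓ ∈ Lh, y = (dEdge D ℓ S T : ℝ) / Q } * (Lh.card : ℝ) ^ β ∈ X :=
    ⟨Lh, hLh, rfl⟩
  have hcInf : c ≤ sInf { y : ℝ | ∃ ℓ ∈ Lh, y = (dEdge D ℓ S T : ℝ) / Q } := by
    obtain ⟨ℓ₀, hℓ₀⟩ := hLh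
    refine le_csInf ⟨_, ℓ₀, hℓ₀, rfl⟩ ?_
    rintro y ⟨ℓ, hℓ, rfl⟩
    exact hc ℓ hℓ
  calc c * (Lh.card : ℝ) ^ β
      ≤ sInf { y : ℝ | ∃ ℓ ∈ Lh, y = (dEdge D ℓ S T : ℝ) / Q } * (Lh.card : ℝ) ^ β := by
        exact mul_le_mul_of_nonneg_right hcInf (Real.rpow_nonneg (Nat.cast_nonneg _) _)
    _ ≤ dDensity D β S T := le_csSup hXbdd hmemX

lemma exists_layers {V L : Type*} [Fintype L] (D : L → V → V → Prop)
    [∀ ℓ, DecidableRel (D ℓ)] (S T : Finset V) (K lam ξ n : ℕ)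
    (hξ : ξ < lam) (hL : lam ≤ Fintype.card L)
    (f : L → ℕ) (hf : ∀ ℓ, f ℓ ≤ n) (hsum : lam * n ≤ ∑ ℓ, f ℓ)
    (hedge : ∀ ℓ, K * f ℓ ≤ dEdge D ℓ S T) :
    ∃ Lh : Finset L, Lh.card = ξ + 1 ∧
      ∀ ℓ ∈ Lh, K * ((lam - ξ) * n) ≤ dEdge D ℓ S T * Fintype.card L := by
  have hcount := aux_count f n lam ξ hξ hL hf hsum
  obtain ⟨Lh, hsub, hcard⟩ := Finset.exists_subset_card_eq hcount
  refine ⟨Lh, hcard, fun ℓ hℓ => ?_⟩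
  have hmem := hsub hℓ
  rw [Finset.mem_filter] at hmem
  calc K * ((lam - ξ) * n) ≤ K * (f ℓ * Fintype.card L) :=
        Nat.mul_le_mul_left _ hmem.2
    _ = (K * f ℓ) * Fintype.card L := by ring
    _ ≤ dEdge D ℓ S T * Fintype.card L := Nat.mul_le_mul_right _ (hedge ℓ)

lemma density_side {V L : Type*} [Fintype L] (D : L → V → V → Prop)
    [∀ ℓ, DecidableRel (D ℓ)] (β : ℝ) (hβ : 0 < β) (S T : Finset V)
    (K lam ξ : ℕ) (hξ : ξ < lam) (hL : lam ≤ Fintype.card L)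
    (N : ℕ) (w : ℝ) (hwnn : 0 ≤ w)
    (hw : w = (N : ℝ) / Real.sqrt ((S.card : ℝ) * (T.card : ℝ)))
    (Lh : Finset L) (hcard : Lh.card = ξ + 1)
    (hE : ∀ ℓ ∈ Lh, K * ((lam - ξ) * N) ≤ dEdge D ℓ S T * Fintype.card L) :
    ((lam : ℝ) - (ξ : ℝ)) * ((ξ : ℝ) + 1) ^ β / (Fintype.card L : ℝ) * ((K : ℝ) * w) ≤
      dDensity D β S T := by
  have hLhne : Lh.Nonempty := by rw [← Finset.card_pos, hcard]; omega
  set Q := Real.sqrt ((S.card : ℝ) * (T.card : ℝ)) with hQ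
  have hQ0 : 0 ≤ Q := Real.sqrt_nonneg _
  have hcL : (0 : ℝ) < (Fintype.card L : ℝ) := by
    have : 0 < Fintype.card L := by omega
    exact_mod_cast this
  have hlx : (0 : ℝ) ≤ (lam : ℝ) - (ξ : ℝ) := by
    have : (ξ : ℝ) ≤ (lam : ℝ) := by exact_mod_cast hξ.le
    linarith
  set c : ℝ := ((lam : ℝ) - (ξ : ℝ)) * ((K : ℝ) * w) / (Fintype.card L : ℝ) with hc
  have hc0 : 0 ≤ c := by
    apply div_nonneg _ hcL.le
    exact mul_nonneg hlx (mul_nonneg (Nat.cast_nonneg _) hwnn)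
  have hcle : ∀ ℓ ∈ Lh, c ≤ (dEdge D ℓ S T : ℝ) / Q := by
    intro ℓ hℓ
    have hcast : (K : ℝ) * (((lam : ℝ) - (ξ : ℝ)) * (N : ℝ)) ≤
        (dEdge D ℓ S T : ℝ) * (Fintype.card L : ℝ) := by
      have := hE ℓ hℓ
      have h2 : ((K * ((lam - ξ) * N) : ℕ) : ℝ) ≤ ((dEdge D ℓ S T * Fintype.card L : ℕ) : ℝ) := by
        exact_mod_cast this
      push_cast [Nat.cast_sub hξ.le] at h2
      convert h2 using 2
    have hA : ((lam : ℝ) - (ξ : ℝ)) * ((K : ℝ) * (N : ℝ)) / (Fintype.card L : ℝ) ≤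
        (dEdge D ℓ S T : ℝ) := by
      rw [div_le_iff₀ hcL]
      nlinarith
    have hcA : c = (((lam : ℝ) - (ξ : ℝ)) * ((K : ℝ) * (N : ℝ)) / (Fintype.card L : ℝ)) / Q := by
      rw [hc, hw]; ring
    rw [hcA]
    exact div_le_div_of_nonneg_right hA hQ0
  have := le_dDensity D β hβ S T Lh hLhne c hc0 hcle
  rw [hcard] at this
  push_cast at this
  calc ((lam : ℝ) - (ξ : ℝ)) * ((ξ : ℝ) + 1) ^ β / (Fintype.card L : ℝ) * ((K : ℝ) * w)
      = c * ((ξ : ℝ) + 1) ^ β := by rw [hc]; ring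
    _ ≤ dDensity D β S T := this

/-- Density lower bound for FirmD-Cores (Lemma 4): with `a = |S|/|T|`,
`ρ(S,T) ≥ max_{0 ≤ ξ < λ} ((λ - ξ)(ξ+1)^β / |L|) · max{k√a, r/√a}`. -/
theorem firmdcore_density_lb {V L : Type*} [Fintype L] (D : L → V → V → Prop)
    [∀ ℓ, DecidableRel (D ℓ)] (β : ℝ) (hβ : 0 < β)
    (k r lam : ℕ) (hlam : 1 ≤ lam) (hlamL : lam ≤ Fintype.card L)
    (S T : Finset V) (hS : S.Nonempty) (hT : T.Nonempty)
    (h : FDCProp D k r lam S T)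
    (a : ℝ) (ha : a = (S.card : ℝ) / (T.card : ℝ)) :
    ((Finset.range lam).sup' (Finset.nonempty_range_iff.mpr (by omega))
        fun ξ : ℕ => ((lam : ℝ) - (ξ : ℝ)) * ((ξ : ℝ) + 1) ^ β / (Fintype.card L : ℝ) *
          max ((k : ℝ) * Real.sqrt a) ((r : ℝ) / Real.sqrt a)) ≤
      dDensity D β S T := by
  have hS1 : (0 : ℝ) < (S.card : ℝ) := by exact_mod_cast hS.card_pos
  have hT1 : (0 : ℝ) < (T.card : ℝ) := by exact_mod_cast hT.card_pos
  have hsa := sqrt_ratio₁ _ _ a hS1 hT1 ha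
  have hsb := sqrt_ratio₂ _ _ a hS1 hT1 ha
  have hsann : 0 ≤ Real.sqrt a := Real.sqrt_nonneg _
  apply Finset.sup'_le
  intro ξ hξ
  rw [Finset.mem_range] at hξ
  -- k-side
  have hk : ((lam : ℝ) - (ξ : ℝ)) * ((ξ : ℝ) + 1) ^ β / (Fintype.card L : ℝ) *
      ((k : ℝ) * Real.sqrt a) ≤ dDensity D β S T := by
    set f : L → ℕ := fun ℓ => (S.filter fun v => k ≤ dOut D ℓ T v).card with hf
    have hfle : ∀ ℓ, f ℓ ≤ S.card := fun ℓ => Finset.card_filter_le _ _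
    have hsum : lam * S.card ≤ ∑ ℓ, f ℓ := by
      have hswap : ∑ ℓ, f ℓ = ∑ v ∈ S, (univ.filter fun ℓ : L => k ≤ dOut D ℓ T v).card := by
        simp only [hf, Finset.card_filter]
        exact Finset.sum_comm
      rw [hswap]
      calc lam * S.card = ∑ _v ∈ S, lam := by rw [Finset.sum_const, smul_eq_mul, mul_comm]
        _ ≤ _ := Finset.sum_le_sum h.1
    have hedge : ∀ ℓ, k * f ℓ ≤ dEdge D ℓ S T := by
      intro ℓ
      rw [dEdge_out]
      calc k * f ℓ = ∑ _v ∈ S.filter (fun v => k ≤ dOut D ℓ T v), k := by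
            rw [Finset.sum_const, smul_eq_mul, mul_comm]
        _ ≤ ∑ v ∈ S.filter (fun v => k ≤ dOut D ℓ T v), dOut D ℓ T v :=
            Finset.sum_le_sum (fun v hv => (Finset.mem_filter.mp hv).2)
        _ ≤ ∑ v ∈ S, dOut D ℓ T v :=
            Finset.sum_le_sum_of_subset (Finset.filter_subset _ _)
    obtain ⟨Lh, hcard, hE⟩ := exists_layers D S T k lam ξ S.card hξ hlamL f hfle hsum hedge
    exact density_side D β hβ S T k lam ξ hξ hlamL S.card (Real.sqrt a) hsann hsa Lh hcard hE
  -- r-side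
  have hr : ((lam : ℝ) - (ξ : ℝ)) * ((ξ : ℝ) + 1) ^ β / (Fintype.card L : ℝ) *
      ((r : ℝ) / Real.sqrt a) ≤ dDensity D β S T := by
    set g : L → ℕ := fun ℓ => (T.filter fun u => r ≤ dIn D ℓ S u).card with hg
    have hgle : ∀ ℓ, g ℓ ≤ T.card := fun ℓ => Finset.card_filter_le _ _
    have hsum : lam * T.card ≤ ∑ ℓ, g ℓ := by
      have hswap : ∑ ℓ, g ℓ = ∑ u ∈ T, (univ.filter fun ℓ : L => r ≤ dIn D ℓ S u).card := by
        simp only [hg, Finset.card_filter]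
        exact Finset.sum_comm
      rw [hswap]
      calc lam * T.card = ∑ _u ∈ T, lam := by rw [Finset.sum_const, smul_eq_mul, mul_comm]
        _ ≤ _ := Finset.sum_le_sum h.2
    have hedge : ∀ ℓ, r * g ℓ ≤ dEdge D ℓ S T := by
      intro ℓ
      rw [dEdge_in]
      calc r * g ℓ = ∑ _u ∈ T.filter (fun u => r ≤ dIn D ℓ S u), r := by
            rw [Finset.sum_const, smul_eq_mul, mul_comm]
        _ ≤ ∑ u ∈ T.filter (fun u => r ≤ dIn D ℓ S u), dIn D ℓ S u :=
            Finset.sum_le_sum (fun u hu => (Finset.mem_filter.mp hu).2)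
        _ ≤ ∑ u ∈ T, dIn D ℓ S u :=
            Finset.sum_le_sum_of_subset (Finset.filter_subset _ _)
    obtain ⟨Lh, hcard, hE⟩ := exists_layers D S T r lam ξ T.card hξ hlamL g hgle hsum hedge
    have := density_side D β hβ S T r lam ξ hξ hlamL T.card (1 / Real.sqrt a)
      (by positivity) hsb Lh hcard hE
    calc ((lam : ℝ) - (ξ : ℝ)) * ((ξ : ℝ) + 1) ^ β / (Fintype.card L : ℝ) *
        ((r : ℝ) / Real.sqrt a)
        = ((lam : ℝ) - (ξ : ℝ)) * ((ξ : ℝ) + 1) ^ β / (Fintype.card L : ℝ) *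
          ((r : ℝ) * (1 / Real.sqrt a)) := by ring
      _ ≤ dDensity D β S T := this
  rcases max_choice ((k : ℝ) * Real.sqrt a) ((r : ℝ) / Real.sqrt a) with hmax | hmax <;>
    rw [hmax]
  · exact hk
  · exact hr
end

section
/- Single-layer directed [x,y]-core bound on directed density: let G = (V,E) be a finite directed graph with at least one edge. For integers x,y ≥ 0, an [x,y]-core is a pair (S,T) of subsets of V (not necessarily disjoint) such that every v∈S has at least x out-neighbors in T and every u∈T has at least y in-neighbors in S. Let (x*,y*) maximize x·y over all pairs (x,y) admitting an [x,y]-core with S and T nonempty, and let (S*,T*) maximize |E(S,T)|/√(|S||T|) over all nonempty S,T ⊆ V, where E(S,T) = {(v,u)∈E : v∈S, u∈T}. Then 2√(x*·y*) ≥ |E(S*,T*)|/√(|S*||T*|). -/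
open Finset

/-- Number of edges of the digraph `D` going from `S` to `T`. -/
def dEdge1 {V : Type*} (D : V → V → Prop) [DecidableRel D] (S T : Finset V) : ℕ :=
  ((S ×ˢ T).filter fun p : V × V => D p.1 p.2).card

/-- `(S,T)` is an `[x,y]`-core: every `v ∈ S` has at least `x` out-neighbors in `T`,
and every `u ∈ T` has at least `y` in-neighbors in `S`. -/
def XYCore {V : Type*} (D : V → V → Prop) [DecidableRel D]
    (x y : ℕ) (S T : Finset V) : Prop :=
  (∀ v ∈ S, x ≤ (T.filter fun u => D v u).card) ∧
  (∀ u ∈ T, y ≤ (S.filter fun v => D v u).card)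

lemma dEdge1_eq_sum_left {V : Type*} (D : V → V → Prop) [DecidableRel D] (S T : Finset V) :
    dEdge1 D S T = ∑ v ∈ S, (T.filter fun u => D v u).card := by
  simp only [dEdge1, Finset.card_filter, Finset.sum_product]

lemma dEdge1_eq_sum_right {V : Type*} (D : V → V → Prop) [DecidableRel D] (S T : Finset V) :
    dEdge1 D S T = ∑ u ∈ T, (S.filter fun v => D v u).card := by
  simp only [dEdge1, Finset.card_filter, Finset.sum_product_right]

lemma dEdge1_erase_left {V : Type*} [DecidableEq V] (D : V → V → Prop) [DecidableRel D]
    (S T : Finset V) {v : V} (hv : v ∈ S) :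
    dEdge1 D S T = (T.filter fun u => D v u).card + dEdge1 D (S.erase v) T := by
  rw [dEdge1_eq_sum_left, dEdge1_eq_sum_left]
  exact (Finset.add_sum_erase S (fun w => (T.filter fun u => D w u).card) hv).symm

lemma dEdge1_erase_right {V : Type*} [DecidableEq V] (D : V → V → Prop) [DecidableRel D]
    (S T : Finset V) {u : V} (hu : u ∈ T) :
    dEdge1 D S T = (S.filter fun v => D v u).card + dEdge1 D S (T.erase u) := by
  rw [dEdge1_eq_sum_right, dEdge1_eq_sum_right]
  exact (Finset.add_sum_erase T (fun w => (S.filter fun v => D v w).card) hu).symm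

set_option maxHeartbeats 1600000 in
/-- If `(x*, y*)` is the maximum cn-pair of a directed graph and `(S*, T*)` its densest
directed subgraph, then `2√(x*·y*) ≥ |E(S*,T*)|/√(|S*||T*|)`. -/
theorem xy_core_density_bound {V : Type*} (D : V → V → Prop) [DecidableRel D]
    (hedge : ∃ v u, D v u)
    (xs ys : ℕ)
    (hex : ∃ S T : Finset V, S.Nonempty ∧ T.Nonempty ∧ XYCore D xs ys S T)
    (hmaxxy : ∀ (x y : ℕ) (S T : Finset V), S.Nonempty → T.Nonempty →
      XYCore D x y S T → x * y ≤ xs * ys)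
    (Sstar Tstar : Finset V) (hSstar : Sstar.Nonempty) (hTstar : Tstar.Nonempty)
    (hmaxd : ∀ S T : Finset V, S.Nonempty → T.Nonempty →
      (dEdge1 D S T : ℝ) / Real.sqrt ((S.card : ℝ) * (T.card : ℝ)) ≤
        (dEdge1 D Sstar Tstar : ℝ) /
          Real.sqrt ((Sstar.card : ℝ) * (Tstar.card : ℝ))) :
    (dEdge1 D Sstar Tstar : ℝ) / Real.sqrt ((Sstar.card : ℝ) * (Tstar.card : ℝ)) ≤
      2 * Real.sqrt ((xs : ℝ) * (ys : ℝ)) := by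
  classical
  set E : ℕ := dEdge1 D Sstar Tstar with hE
  set s : ℕ := Sstar.card with hs
  set t : ℕ := Tstar.card with ht
  have hs1 : 1 ≤ s := Finset.card_pos.mpr hSstar
  have ht1 : 1 ≤ t := Finset.card_pos.mpr hTstar
  have hsR : (1 : ℝ) ≤ (s : ℝ) := by exact_mod_cast hs1
  have htR : (1 : ℝ) ≤ (t : ℝ) := by exact_mod_cast ht1
  have hst : (0 : ℝ) < (s : ℝ) * (t : ℝ) := by
    have := Nat.mul_pos hs1 ht1; exact_mod_cast this
  have hb0 : (0 : ℝ) < Real.sqrt ((s : ℝ) * (t : ℝ)) := Real.sqrt_pos.mpr hst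
  have hb2 : Real.sqrt ((s : ℝ) * (t : ℝ)) ^ 2 = (s : ℝ) * t :=
    Real.sq_sqrt (by positivity)
  -- degree bound for vertices in Sstar
  have degS : ∀ v ∈ Sstar, (E : ℝ) / (2 * s) ≤ ((Tstar.filter fun u => D v u).card : ℝ) := by
    intro v hv
    set d : ℕ := (Tstar.filter fun u => D v u).card with hd
    have hsplit : E = d + dEdge1 D (Sstar.erase v) Tstar := dEdge1_erase_left D Sstar Tstar hv
    rcases eq_or_lt_of_le hs1 with h1 | h2
    · -- s = 1 : Sstar = {v}, erase empty
      have : Sstar = {v} := by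
        apply Finset.eq_singleton_iff_unique_mem.mpr
        exact ⟨hv, fun w hw => Finset.card_le_one.mp (by omega) w hw v hv⟩
      have herase : Sstar.erase v = ∅ := by simp [this]
      have hEd : E = d := by
        simp [herase, dEdge1, Finset.empty_product] at hsplit; omega
      rw [hEd]
      have hd0 : (0 : ℝ) ≤ (d : ℝ) := by positivity
      rw [div_le_iff₀ (by linarith)]
      nlinarith [hd0, hsR]
    · -- s ≥ 2
      have hne : (Sstar.erase v).Nonempty := by
        rw [← Finset.card_pos, Finset.card_erase_of_mem hv]; omega
      have hmax := hmaxd (Sstar.erase v) Tstar hne hTstar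
      rw [Finset.card_erase_of_mem hv] at hmax
      set a : ℝ := Real.sqrt (((s - 1 : ℕ) : ℝ) * (t : ℝ)) with ha
      have hcast : ((s - 1 : ℕ) : ℝ) = (s : ℝ) - 1 := by
        push_cast [Nat.cast_sub hs1]; ring
      have ha0 : 0 ≤ a := Real.sqrt_nonneg _
      have ha2 : a ^ 2 = ((s : ℝ) - 1) * t := by
        rw [ha, Real.sq_sqrt (by rw [hcast]; nlinarith)]; rw [hcast]
      have hab : a ≤ Real.sqrt ((s : ℝ) * t) := by
        apply Real.sqrt_le_sqrt; rw [hcast]; nlinarith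
      have hEd : (dEdge1 D (Sstar.erase v) Tstar : ℝ) = (E : ℝ) - d := by
        rw [hsplit]; push_cast; ring
      rw [hEd] at hmax
      -- hmax : ((E:ℝ) - d) / a ≤ E / √(s*t)
      set b : ℝ := Real.sqrt ((s : ℝ) * t) with hbdef
      have hE0 : (0 : ℝ) ≤ (E : ℝ) := by positivity
      have hd0 : (0 : ℝ) ≤ (d : ℝ) := by positivity
      have hkey : ((E : ℝ) - d) * b ≤ (E : ℝ) * a := by
        rcases eq_or_lt_of_le ha0 with h0 | hpos
        · -- a = 0 forces E - d ≤ 0 anyway? a=0 means (s-1)*t=0, impossible since s≥2,t≥1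
          exfalso
          have : ((s : ℝ) - 1) * t = 0 := by rw [← ha2, ← h0]; ring
          have hs2 : (2 : ℝ) ≤ (s : ℝ) := by exact_mod_cast h2
          nlinarith
        · have := (div_le_div_iff₀ hpos hb0).mp hmax
          linarith
      -- from (E-d)b ≤ E a, a² = (s-1)t, b² = st, a ≤ b, deduce E ≤ 2 s d
      have hfin : (E : ℝ) ≤ 2 * s * d := by
        have h3 := mul_le_mul_of_nonneg_right hkey (by positivity : (0:ℝ) ≤ a + b)
        have e1 : (E : ℝ) * b ^ 2 - (E : ℝ) * a ^ 2 = (E : ℝ) * (t : ℝ) := by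
          rw [hb2, ha2]; ring
        have h4 : (E : ℝ) * (t : ℝ) ≤ (d : ℝ) * (a * b + b ^ 2) := by nlinarith [h3, e1]
        have h5 : a * b ≤ b ^ 2 := by nlinarith [mul_le_mul_of_nonneg_right hab hb0.le]
        have h6 : (d : ℝ) * (a * b + b ^ 2) ≤ 2 * d * ((s : ℝ) * t) := by nlinarith [hb2, hd0, h5]
        nlinarith [h4, h6, htR, hE0, hd0, hsR]
      rw [div_le_iff₀ (by linarith)]
      linarith
  -- degree bound for vertices in Tstar
  have degT : ∀ u ∈ Tstar, (E : ℝ) / (2 * t) ≤ ((Sstar.filter fun v => D v u).card : ℝ) := by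
    intro u hu
    set d : ℕ := (Sstar.filter fun v => D v u).card with hd
    have hsplit : E = d + dEdge1 D Sstar (Tstar.erase u) := dEdge1_erase_right D Sstar Tstar hu
    rcases eq_or_lt_of_le ht1 with h1 | h2
    · have : Tstar = {u} := by
        apply Finset.eq_singleton_iff_unique_mem.mpr
        exact ⟨hu, fun w hw => Finset.card_le_one.mp (by omega) w hw u hu⟩
      have herase : Tstar.erase u = ∅ := by simp [this]
      have hEd : E = d := by
        simp [herase, dEdge1, Finset.product_empty] at hsplit; omega
      rw [hEd]
      have hd0 : (0 : ℝ) ≤ (d : ℝ) := by positivity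
      rw [div_le_iff₀ (by linarith)]
      nlinarith [hd0, htR]
    · have hne : (Tstar.erase u).Nonempty := by
        rw [← Finset.card_pos, Finset.card_erase_of_mem hu]; omega
      have hmax := hmaxd Sstar (Tstar.erase u) hSstar hne
      rw [Finset.card_erase_of_mem hu] at hmax
      set a : ℝ := Real.sqrt ((s : ℝ) * ((t - 1 : ℕ) : ℝ)) with ha
      have hcast : ((t - 1 : ℕ) : ℝ) = (t : ℝ) - 1 := by
        push_cast [Nat.cast_sub ht1]; ring
      have ha0 : 0 ≤ a := Real.sqrt_nonneg _
      have ha2 : a ^ 2 = (s : ℝ) * ((t : ℝ) - 1) := by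
        rw [ha, Real.sq_sqrt (by rw [hcast]; nlinarith)]; rw [hcast]
      have hab : a ≤ Real.sqrt ((s : ℝ) * t) := by
        apply Real.sqrt_le_sqrt; rw [hcast]; nlinarith
      have hEd : (dEdge1 D Sstar (Tstar.erase u) : ℝ) = (E : ℝ) - d := by
        rw [hsplit]; push_cast; ring
      rw [hEd] at hmax
      set b : ℝ := Real.sqrt ((s : ℝ) * t) with hbdef
      have hE0 : (0 : ℝ) ≤ (E : ℝ) := by positivity
      have hd0 : (0 : ℝ) ≤ (d : ℝ) := by positivity
      have hkey : ((E : ℝ) - d) * b ≤ (E : ℝ) * a := by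
        rcases eq_or_lt_of_le ha0 with h0 | hpos
        · exfalso
          have : (s : ℝ) * ((t : ℝ) - 1) = 0 := by rw [← ha2, ← h0]; ring
          have ht2 : (2 : ℝ) ≤ (t : ℝ) := by exact_mod_cast h2
          nlinarith
        · have := (div_le_div_iff₀ hpos hb0).mp hmax
          linarith
      have hfin : (E : ℝ) ≤ 2 * t * d := by
        have h3 := mul_le_mul_of_nonneg_right hkey (by positivity : (0:ℝ) ≤ a + b)
        have e1 : (E : ℝ) * b ^ 2 - (E : ℝ) * a ^ 2 = (E : ℝ) * (s : ℝ) := by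
          rw [hb2, ha2]; ring
        have h4 : (E : ℝ) * (s : ℝ) ≤ (d : ℝ) * (a * b + b ^ 2) := by nlinarith [h3, e1]
        have h5 : a * b ≤ b ^ 2 := by nlinarith [mul_le_mul_of_nonneg_right hab hb0.le]
        have h6 : (d : ℝ) * (a * b + b ^ 2) ≤ 2 * d * ((s : ℝ) * t) := by nlinarith [hb2, hd0, h5]
        nlinarith [h4, h6, htR, hE0, hd0, hsR]
      rw [div_le_iff₀ (by linarith)]
      linarith
  -- build the core
  set X : ℕ := ⌈(E : ℝ) / (2 * s)⌉₊ with hX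
  set Y : ℕ := ⌈(E : ℝ) / (2 * t)⌉₊ with hY
  have hcore : XYCore D X Y Sstar Tstar := by
    constructor
    · intro v hv
      exact Nat.ceil_le.mpr (degS v hv)
    · intro u hu
      exact Nat.ceil_le.mpr (degT u hu)
  have hxy : X * Y ≤ xs * ys := hmaxxy X Y Sstar Tstar hSstar hTstar hcore
  have hlow : (E : ℝ) / (2 * s) * ((E : ℝ) / (2 * t)) ≤ (X : ℝ) * Y := by
    apply mul_le_mul (Nat.le_ceil _) (Nat.le_ceil _) (by positivity) (by positivity)
  have hxyR : (X : ℝ) * Y ≤ (xs : ℝ) * ys := by exact_mod_cast hxy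
  have hE0 : (0 : ℝ) ≤ (E : ℝ) := by positivity
  have hsq : ((E : ℝ) / Real.sqrt ((s : ℝ) * t)) ^ 2 ≤ 4 * ((xs : ℝ) * ys) := by
    rw [div_pow, hb2]
    have : (E : ℝ) ^ 2 / ((s : ℝ) * t) = 4 * ((E : ℝ) / (2 * s) * ((E : ℝ) / (2 * t))) := by
      field_simp; ring
    rw [this]
    nlinarith
  have h2s : Real.sqrt (4 * ((xs : ℝ) * ys)) = 2 * Real.sqrt ((xs : ℝ) * ys) := by
    rw [show (4 : ℝ) * ((xs : ℝ) * ys) = 2 ^ 2 * ((xs : ℝ) * ys) by ring]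
    rw [Real.sqrt_mul (by norm_num : (0:ℝ) ≤ 2 ^ 2) ((xs : ℝ) * ys)]
    rw [Real.sqrt_sq (by norm_num : (0:ℝ) ≤ 2)]
  rw [← h2s]
  exact (Real.le_sqrt (by positivity) (by positivity)).mpr hsq
end

section
/- FirmCore solves the BFF-MM problem exactly: let k_max be the largest integer k such that some nonempty set S ⊆ V satisfies the (k,|L|)-FirmCore property, and let C be the (k_max,|L|)-FirmCore of G. Then min_{ℓ∈L} min_{v∈C} deg^C_ℓ(v) = k_max, and for every nonempty S ⊆ V, min_{ℓ∈L} min_{v∈S} deg^S_ℓ(v) ≤ k_max; i.e., C maximizes min_{ℓ∈L} μ(S,ℓ) over all nonempty S ⊆ V, where μ(S,ℓ) = min_{v∈S} deg^S_ℓ(v). -/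
open Finset

lemma fc_of_inf {V L : Type*} [Fintype L] [Nonempty L] (G : L → SimpleGraph V)
    [∀ ℓ, DecidableRel (G ℓ).Adj] (S : Finset V) (hS : S.Nonempty) :
    FCProp G (univ.inf' univ_nonempty fun ℓ : L => S.inf' hS fun v => degS G S ℓ v)
      (Fintype.card L) S := by
  intro v hv
  have : (univ.filter fun ℓ : L =>
      (univ.inf' univ_nonempty fun ℓ : L => S.inf' hS fun v => degS G S ℓ v) ≤ degS G S ℓ v)
      = (univ : Finset L) := by
    apply Finset.filter_true_of_mem
    intro ℓ _
    exact le_trans (Finset.inf'_le _ (mem_univ ℓ)) (Finset.inf'_le _ hv)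
  rw [this]
  exact le_of_eq (Finset.card_univ).symm

/-- FirmCore solves the BFF-MM problem exactly: the `(k_max, |L|)`-FirmCore `C`
attains objective value `min_{ℓ ∈ L} min_{v ∈ C} deg^C_ℓ(v) = k_max`, and every
nonempty `S ⊆ V` has objective value at most `k_max`. -/
theorem firmcore_solves_bff {V L : Type*} [Fintype L] [Nonempty L]
    (G : L → SimpleGraph V) [∀ ℓ, DecidableRel (G ℓ).Adj]
    (kmax : ℕ)
    (hk_ex : ∃ S : Finset V, S.Nonempty ∧ FCProp G kmax (Fintype.card L) S)
    (hk_max : ∀ (k : ℕ) (S : Finset V), S.Nonempty →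
      FCProp G k (Fintype.card L) S → k ≤ kmax)
    (C : Finset V) (hC : IsFirmCore G kmax (Fintype.card L) C)
    (hCne : C.Nonempty) :
    (univ.inf' univ_nonempty fun ℓ : L => C.inf' hCne fun v => degS G C ℓ v) = kmax ∧
    ∀ (S : Finset V) (hS : S.Nonempty),
      (univ.inf' univ_nonempty fun ℓ : L => S.inf' hS fun v => degS G S ℓ v) ≤ kmax := by
  have key : ∀ (S : Finset V) (hS : S.Nonempty),
      (univ.inf' univ_nonempty fun ℓ : L => S.inf' hS fun v => degS G S ℓ v) ≤ kmax := by
    intro S hS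
    exact hk_max _ S hS (fc_of_inf G S hS)
  refine ⟨le_antisymm (key C hCne) ?_, key⟩
  apply Finset.le_inf'
  intro ℓ _
  apply Finset.le_inf'
  intro v hv
  have h := hC.1 v hv
  have heq : (univ.filter fun ℓ : L => kmax ≤ degS G C ℓ v) = (univ : Finset L) := by
    apply Finset.eq_univ_of_card
    refine le_antisymm (Finset.card_le_univ _) ?_
    exact le_trans (le_of_eq Finset.card_univ.symm) h
  have := Finset.mem_univ ℓ
  rw [← heq, Finset.mem_filter] at this
  exact this.2
end
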